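/- If the minimum s-t cut in the importance-weighted flow graph T^f_{L,τ} is strictly less than τ·Σ_{v∈leaves(T)} f(v), then Ψ̂^f_T(L) < τ; moreover a witnessing set S ⊆ leaves(T)∖L with λ_T(S, leaves(T)∖S) < τ·Σ_{v∈S} f(v) can be obtained as S = S' ∩ leaves(T) for any s-side S' of a minimum cut. -/

import Mathlib

open Finset
open scoped ENNReal

/-- Weight of the (directed) cut leaving `S` in a graph with capacities `c`. -/
noncomputable def treeCutE {V : Type*} [Fintype V] [DecidableEq V] (c : V → V → ℝ≥0∞)
    (S : Finset V) : ℝ≥0∞ :=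
  ∑ u ∈ S, ∑ v ∈ Sᶜ, c u v

/-- `λ(A,B)`: minimum weight of a cut separating `A` from `B`. -/
noncomputable def lamE {V : Type*} [Fintype V] [DecidableEq V] (c : V → V → ℝ≥0∞)
    (A B : Finset V) : ℝ≥0∞ :=
  ⨅ S ∈ {S : Finset V | A ⊆ S ∧ Disjoint S B}, treeCutE c S

/-- `Ψ̂_T(L)` for the tree with edge weights `w` and leaf set `leaves`. -/
noncomputable def PsiHatE {V : Type*} [Fintype V] [DecidableEq V] (w : V → V → ℝ≥0∞)
    (leaves L : Finset V) : ℝ≥0∞ :=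
  ⨅ S ∈ {S : Finset V | S.Nonempty ∧ S ⊆ leaves \ L},
    lamE w S (leaves \ S) / (S.card : ℝ≥0∞)

/-- Capacities of the flow graph `T_{L,τ}`: all tree edges, an edge of capacity `τ` between
the source `s = Sum.inr true` and every leaf, and an edge of capacity `∞` between every
vertex of `L` and the sink `t = Sum.inr false`. -/
noncomputable def flowW {V : Type*} [DecidableEq V] (w : V → V → ℝ≥0∞)
    (leaves L : Finset V) (τ : ℝ≥0∞) : (V ⊕ Bool) → (V ⊕ Bool) → ℝ≥0∞
  | Sum.inl u, Sum.inl v => w u v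
  | Sum.inr true, Sum.inl v => if v ∈ leaves then τ else 0
  | Sum.inl v, Sum.inr true => if v ∈ leaves then τ else 0
  | Sum.inl v, Sum.inr false => if v ∈ L then ⊤ else 0
  | Sum.inr false, Sum.inl v => if v ∈ L then ⊤ else 0
  | Sum.inr _, Sum.inr _ => 0

/-- The value of the minimum `s`-`t` cut (= maximum `s`-`t` flow) in `T_{L,τ}`. -/
noncomputable def minSTcut {V : Type*} [Fintype V] [DecidableEq V] (w : V → V → ℝ≥0∞)
    (leaves L : Finset V) (τ : ℝ≥0∞) : ℝ≥0∞ :=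
  lamE (flowW w leaves L τ) {Sum.inr true} {Sum.inr false}

/-- Importance-weighted objective `Ψ̂^f_T(L)`. -/
noncomputable def PsiHatEf {V : Type*} [Fintype V] [DecidableEq V] (w : V → V → ℝ≥0∞)
    (f : V → ℝ≥0∞) (leaves L : Finset V) : ℝ≥0∞ :=
  ⨅ S ∈ {S : Finset V | S.Nonempty ∧ S ⊆ leaves \ L},
    lamE w S (leaves \ S) / ∑ v ∈ S, f v

/-- Capacities of the importance-weighted flow graph `T^f_{L,τ}`: all tree edges, an edge of
capacity `τ·f(v)` between the source `s = Sum.inr true` and every leaf `v`, and an edge of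
capacity `∞` between every vertex of `L` and the sink `t = Sum.inr false`. -/
noncomputable def flowWf {V : Type*} [DecidableEq V] (w : V → V → ℝ≥0∞) (f : V → ℝ≥0∞)
    (leaves L : Finset V) (τ : ℝ≥0∞) : (V ⊕ Bool) → (V ⊕ Bool) → ℝ≥0∞
  | Sum.inl u, Sum.inl v => w u v
  | Sum.inr true, Sum.inl v => if v ∈ leaves then τ * f v else 0
  | Sum.inl v, Sum.inr true => if v ∈ leaves then τ * f v else 0
  | Sum.inl v, Sum.inr false => if v ∈ L then ⊤ else 0
  | Sum.inr false, Sum.inl v => if v ∈ L then ⊤ else 0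
  | Sum.inr _, Sum.inr _ => 0

/-- The minimum `s`-`t` cut value in `T^f_{L,τ}`. -/
noncomputable def minSTcutF {V : Type*} [Fintype V] [DecidableEq V] (w : V → V → ℝ≥0∞)
    (f : V → ℝ≥0∞) (leaves L : Finset V) (τ : ℝ≥0∞) : ℝ≥0∞ :=
  lamE (flowWf w f leaves L τ) {Sum.inr true} {Sum.inr false}



section Aux

variable {V : Type*} [Fintype V] [DecidableEq V]

lemma cut_decomp (w : V → V → ℝ≥0∞) (f : V → ℝ≥0∞)
    (leaves L : Finset V) (τ : ℝ≥0∞) (Sext : Finset (V ⊕ Bool))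
    (hs : Sum.inr true ∈ Sext) (ht : Sum.inr false ∉ Sext) :
    treeCutE (flowWf w f leaves L τ) Sext =
      treeCutE w (Finset.univ.filter (fun v => Sum.inl v ∈ Sext))
      + τ * (∑ v ∈ leaves \ Finset.univ.filter (fun v => Sum.inl v ∈ Sext), f v)
      + ∑ _v ∈ (Finset.univ.filter (fun v => Sum.inl v ∈ Sext)) ∩ L, (⊤ : ℝ≥0∞) := by
  classical
  set S' := Finset.univ.filter (fun v => Sum.inl v ∈ Sext) with hS'
  have hSext : Sext = insert (Sum.inr true) (S'.image Sum.inl) := by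
    ext x
    cases x with
    | inl v => simp [hS']
    | inr b => cases b <;> simp [hs, ht]
  have hSc : Sextᶜ = insert (Sum.inr false) ((S'ᶜ).image Sum.inl) := by
    ext x
    cases x with
    | inl v => simp [hS']
    | inr b => cases b <;> simp [hs, ht]
  have hinj : Function.Injective (Sum.inl : V → V ⊕ Bool) := Sum.inl_injective
  have inner : ∀ u : V ⊕ Bool, ∑ v ∈ Sextᶜ, flowWf w f leaves L τ u v =
      flowWf w f leaves L τ u (Sum.inr false)
        + ∑ v ∈ S'ᶜ, flowWf w f leaves L τ u (Sum.inl v) := by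
    intro u
    rw [hSc, Finset.sum_insert (by simp), Finset.sum_image (fun a _ b _ h => hinj h)]
  have step1 : treeCutE (flowWf w f leaves L τ) Sext =
      ∑ u ∈ Sext, (flowWf w f leaves L τ u (Sum.inr false)
        + ∑ v ∈ S'ᶜ, flowWf w f leaves L τ u (Sum.inl v)) :=
    Finset.sum_congr rfl (fun u _ => inner u)
  rw [step1, hSext, Finset.sum_insert (by simp),
    Finset.sum_image (fun a _ b _ h => hinj h)]
  have h1 : (flowWf w f leaves L τ (Sum.inr true) (Sum.inr false)
      + ∑ v ∈ S'ᶜ, flowWf w f leaves L τ (Sum.inr true) (Sum.inl v)) =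
      τ * ∑ v ∈ leaves \ S', f v := by
    have e : ∀ v ∈ S'ᶜ, flowWf w f leaves L τ (Sum.inr true) (Sum.inl v) =
        if v ∈ leaves \ S' then τ * f v else 0 := by
      intro v hv
      simp only [Finset.mem_compl] at hv
      simp [flowWf, Finset.mem_sdiff, hv]
    rw [Finset.sum_congr rfl e, Finset.sum_ite_mem, Finset.mul_sum]
    have hinter : S'ᶜ ∩ (leaves \ S') = leaves \ S' := by
      apply Finset.inter_eq_right.mpr
      intro v hv
      simp only [Finset.mem_sdiff] at hv
      simpa using hv.2
    simp [flowWf, hinter]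
  have h2 : ∀ u ∈ S', (flowWf w f leaves L τ (Sum.inl u) (Sum.inr false)
      + ∑ v ∈ S'ᶜ, flowWf w f leaves L τ (Sum.inl u) (Sum.inl v)) =
      (if u ∈ L then (⊤ : ℝ≥0∞) else 0) + ∑ v ∈ S'ᶜ, w u v := by
    intro u _
    simp [flowWf]
  rw [h1, Finset.sum_congr rfl h2, Finset.sum_add_distrib, treeCutE]
  rw [Finset.sum_ite_mem, Finset.inter_comm]
  have : (Finset.univ : Finset V) ∩ L = L := by simp
  ring

end Aux

/-- if the minimum `s`-`t` cut in `T^f_{L,τ}` is strictly less than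
`τ·Σ_{v ∈ leaves(T)} f(v)`, then `Ψ̂^f_T(L) < τ`; moreover, for any `s`-side `Sext` of a
minimum cut, the set `S = Sext ∩ leaves(T)` witnesses this: `S ⊆ leaves(T)∖L` and
`λ_T(S, leaves(T)∖S) < τ·Σ_{v∈S} f(v)`. -/
theorem stmt16 {V : Type*} [Fintype V] [DecidableEq V]
    (T : SimpleGraph V) [DecidableRel T.Adj] (hT : T.IsTree)
    (w : V → V → ℝ≥0∞) (hsymm : ∀ u v, w u v = w v u)
    (hsupp : ∀ u v, w u v ≠ 0 → T.Adj u v) (hfin : ∀ u v, w u v ≠ ⊤)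
    (leaves : Finset V) (hleaves : leaves = Finset.univ.filter (fun x => T.degree x = 1))
    (f : V → ℝ≥0∞) (hf : ∀ v, 0 < f v) (hf' : ∀ v, f v ≠ ⊤)
    (L : Finset V) (hL : L ⊆ leaves) (τ : ℝ≥0∞) (hτ : τ ≠ ⊤)
    (h : minSTcutF w f leaves L τ < τ * ∑ v ∈ leaves, f v) :
    PsiHatEf w f leaves L < τ ∧
    ∀ Sext : Finset (V ⊕ Bool),
      Sum.inr true ∈ Sext → Sum.inr false ∉ Sext →
      treeCutE (flowWf w f leaves L τ) Sext = minSTcutF w f leaves L τ →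
      (leaves.filter (fun v => Sum.inl v ∈ Sext)) ⊆ leaves \ L ∧
      lamE w (leaves.filter (fun v => Sum.inl v ∈ Sext))
          (leaves \ leaves.filter (fun v => Sum.inl v ∈ Sext)) <
        τ * ∑ v ∈ leaves.filter (fun v => Sum.inl v ∈ Sext), f v := by
  classical
  have hfinsum : ∀ s : Finset V, ∑ v ∈ s, f v ≠ ⊤ :=
    fun s => (ENNReal.sum_lt_top.2 (fun v _ => lt_top_iff_ne_top.2 (hf' v))).ne
  have hRHSfin : τ * ∑ v ∈ leaves, f v ≠ ⊤ := ENNReal.mul_ne_top hτ (hfinsum leaves)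
  -- key claim
  have key : ∀ Sext : Finset (V ⊕ Bool),
      Sum.inr true ∈ Sext → Sum.inr false ∉ Sext →
      treeCutE (flowWf w f leaves L τ) Sext = minSTcutF w f leaves L τ →
      (leaves.filter (fun v => Sum.inl v ∈ Sext)) ⊆ leaves \ L ∧
      lamE w (leaves.filter (fun v => Sum.inl v ∈ Sext))
          (leaves \ leaves.filter (fun v => Sum.inl v ∈ Sext)) <
        τ * ∑ v ∈ leaves.filter (fun v => Sum.inl v ∈ Sext), f v := by
    intro Sext hs ht hmin
    set S' : Finset V := Finset.univ.filter (fun v => Sum.inl v ∈ Sext) with hS'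
    set S : Finset V := leaves.filter (fun v => Sum.inl v ∈ Sext) with hS
    have hdec := cut_decomp w f leaves L τ Sext hs ht
    have hcutfin : treeCutE (flowWf w f leaves L τ) Sext ≠ ⊤ := by
      rw [hmin]
      exact (h.trans hRHSfin.lt_top).ne
    -- no vertex of L on the s-side
    have hSL : S' ∩ L = ∅ := by
      by_contra hne
      obtain ⟨v, hv⟩ := Finset.nonempty_iff_ne_empty.2 hne
      apply hcutfin
      rw [hdec]
      have hcard : (S' ∩ L).card ≠ 0 := Finset.card_ne_zero_of_mem hv
      have : (∑ _v ∈ S' ∩ L, (⊤ : ℝ≥0∞)) = ⊤ := by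
        rw [Finset.sum_const, nsmul_eq_mul, ENNReal.mul_top (Nat.cast_ne_zero.2 hcard)]
      rw [this, add_top]
    have hsub : S ⊆ leaves \ L := by
      intro v hv
      rw [hS, Finset.mem_filter] at hv
      rw [Finset.mem_sdiff]
      refine ⟨hv.1, fun hvL => ?_⟩
      have : v ∈ S' ∩ L := by
        rw [Finset.mem_inter, hS', Finset.mem_filter]
        exact ⟨⟨Finset.mem_univ v, hv.2⟩, hvL⟩
      simp [hSL] at this
    -- leaves \ S' = leaves \ S
    have hls : leaves \ S' = leaves \ S := by
      ext v
      simp only [Finset.mem_sdiff, hS, hS', Finset.mem_filter, Finset.mem_univ, true_and]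
      tauto
    have hdec' : treeCutE (flowWf w f leaves L τ) Sext =
        treeCutE w S' + τ * ∑ v ∈ leaves \ S, f v := by
      rw [hdec, hSL, hls]
      simp
      rfl
    have hsplit : τ * ∑ v ∈ leaves, f v =
        τ * ∑ v ∈ S, f v + τ * ∑ v ∈ leaves \ S, f v := by
      rw [← mul_add]
      congr 1
      rw [add_comm, Finset.sum_sdiff (Finset.filter_subset _ _)]
    have h1 : treeCutE w S' + τ * ∑ v ∈ leaves \ S, f v <
        τ * ∑ v ∈ S, f v + τ * ∑ v ∈ leaves \ S, f v := by
      rw [← hdec', hmin, ← hsplit]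
      exact h
    have h2 : treeCutE w S' < τ * ∑ v ∈ S, f v :=
      (ENNReal.add_lt_add_iff_right (ENNReal.mul_ne_top hτ (hfinsum _))).1 h1
    have h3 : lamE w S (leaves \ S) ≤ treeCutE w S' := by
      refine iInf_le_of_le S' (iInf_le_of_le ?_ le_rfl)
      constructor
      · intro v hv
        rw [hS, Finset.mem_filter] at hv
        rw [hS', Finset.mem_filter]
        exact ⟨Finset.mem_univ v, hv.2⟩
      · rw [Finset.disjoint_left]
        intro v hv hv'
        rw [Finset.mem_sdiff] at hv'
        rw [hS', Finset.mem_filter] at hv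
        exact hv'.2 (by rw [hS, Finset.mem_filter]; exact ⟨hv'.1, hv.2⟩)
    exact ⟨hsub, h3.trans_lt h2⟩
  -- existence of a minimum cut
  obtain ⟨S₀, hS₀, hS₀min⟩ := Set.exists_min_image
    {S : Finset (V ⊕ Bool) | {Sum.inr true} ⊆ S ∧ Disjoint S {Sum.inr false}}
    (treeCutE (flowWf w f leaves L τ)) (Set.toFinite _)
    ⟨{Sum.inr true}, by simp⟩
  have hS₀eq : treeCutE (flowWf w f leaves L τ) S₀ = minSTcutF w f leaves L τ := by
    refine le_antisymm ?_ (iInf_le_of_le S₀ (iInf_le_of_le hS₀ le_rfl))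
    exact le_iInf₂ fun T hT => hS₀min T hT
  have hs0 : Sum.inr true ∈ S₀ := hS₀.1 (Finset.mem_singleton_self _)
  have ht0 : Sum.inr false ∉ S₀ := fun hmem =>
    (Finset.disjoint_left.1 hS₀.2) hmem (Finset.mem_singleton_self _)
  obtain ⟨hsub0, hlt0⟩ := key S₀ hs0 ht0 hS₀eq
  set S : Finset V := leaves.filter (fun v => Sum.inl v ∈ S₀) with hSdef
  have hSne : S.Nonempty := by
    rw [Finset.nonempty_iff_ne_empty]
    intro h0
    rw [h0] at hlt0
    simp at hlt0
  have hsum0 : (∑ v ∈ S, f v) ≠ 0 := by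
    intro h0
    obtain ⟨v, hv⟩ := hSne
    exact (hf v).ne' ((Finset.sum_eq_zero_iff.1 h0) v hv)
  refine ⟨?_, key⟩
  have hPsi : PsiHatEf w f leaves L ≤ lamE w S (leaves \ S) / ∑ v ∈ S, f v :=
    iInf_le_of_le S (iInf_le_of_le ⟨hSne, hsub0⟩ le_rfl)
  refine hPsi.trans_lt ?_
  rw [ENNReal.div_lt_iff (Or.inl hsum0) (Or.inl (hfinsum S))]
  exact hlt0
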